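/- Let c : (2πℤ)^d → ℝ be nonnegative and bounded with p ↦ c(p)² summable. For p ∈ (2πℤ)^d∖{0}, set e_p = √(|p|⁴ + 2|p|²c(p)), A_p = |p|² + c(p), B_p = c(p), α_p = (A_p − √(A_p² − B_p²))/B_p if c(p) > 0 and α_p = 0 otherwise, and β_p = (1/2)·artanh(α_p). Then the family p ↦ e_p·(cosh(2β_p) − 1)²/(16·β_p²), indexed by p ∈ (2πℤ)^d∖{0}, is summable (with the convention that the summand is 0 when β_p = 0). -/

import Mathlib

open Real

noncomputable section

/-- `|p|²` for the lattice point `p = 2πk ∈ (2πℤ)^d`. -/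
def pSq (d : ℕ) (k : Fin d → ℤ) : ℝ := ∑ j, (2 * π * (k j : ℝ)) ^ 2

/-- The inverse hyperbolic tangent, `artanh x = (1/2)·log((1+x)/(1-x))`. -/
def artanh (x : ℝ) : ℝ := (1 / 2) * Real.log ((1 + x) / (1 - x))

/-- The Bogoliubov coefficient `α_p = (A_p - √(A_p² - B_p²))/B_p` with
`A_p = |p|² + c(p)`, `B_p = c(p)`, and the convention `α_p = 0` if `c(p) = 0`. -/
def alphaCoef (d : ℕ) (c : (Fin d → ℤ) → ℝ) (k : Fin d → ℤ) : ℝ :=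
  if 0 < c k then
    (pSq d k + c k - Real.sqrt ((pSq d k + c k) ^ 2 - (c k) ^ 2)) / c k
  else 0

/-- `β_p = (1/2)·artanh(α_p)`. -/
def betaCoef (d : ℕ) (c : (Fin d → ℤ) → ℝ) (k : Fin d → ℤ) : ℝ :=
  (1 / 2) * _root_.artanh (alphaCoef d c k)

/-- The elementary excitation energy `e_p = √(|p|⁴ + 2|p|²c(p))`. -/
def excitation (d : ℕ) (c : (Fin d → ℤ) → ℝ) (k : Fin d → ℤ) : ℝ :=
  Real.sqrt ((pSq d k) ^ 2 + 2 * pSq d k * c k)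

lemma artanh_zero' : _root_.artanh 0 = 0 := by simp [_root_.artanh]

lemma pSq_ge' (d : ℕ) (k : Fin d → ℤ) (hk : k ≠ 0) : 4 * π ^ 2 ≤ pSq d k := by
  obtain ⟨j, hj⟩ : ∃ j, k j ≠ 0 := by
    by_contra h; push_neg at h; exact hk (funext h)
  have h2 : (1:ℝ) ≤ (k j : ℝ) ^ 2 := by
    have h3 : 1 ≤ (k j) ^ 2 := by nlinarith [Int.one_le_abs hj, sq_abs (k j), abs_nonneg (k j)]
    exact_mod_cast h3
  have h1 : (4:ℝ) * π ^ 2 ≤ (2 * π * (k j : ℝ)) ^ 2 := by nlinarith [Real.pi_pos]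
  exact h1.trans (Finset.single_le_sum (f := fun i => (2 * π * (k i : ℝ)) ^ 2)
    (fun i _ => sq_nonneg _) (Finset.mem_univ j))

lemma exp_artanh' {a : ℝ} (h0 : 0 ≤ a) (h1 : a < 1) :
    Real.exp (_root_.artanh a) = Real.sqrt ((1 + a) / (1 - a)) := by
  have hu : 0 < (1 + a) / (1 - a) := div_pos (by linarith) (by linarith)
  rw [_root_.artanh, show (1:ℝ)/2 * Real.log ((1+a)/(1-a)) = Real.log ((1+a)/(1-a)) / 2 by ring,
    ← Real.log_sqrt hu.le, Real.exp_log (Real.sqrt_pos.2 hu)]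
set_option maxHeartbeats 1000000 in
lemma core (Q M P C A E a b : ℝ) (hQpos : 0 < Q) (hM0 : 0 ≤ M) (hc0 : 0 < C)
    (hM : C ≤ M) (hP : Q ≤ P) (hA : A = P + C) (hE : E = Real.sqrt (A ^ 2 - C ^ 2))
    (ha : a = (A - E) / C) (hb : 2 * b = _root_.artanh a) :
    E * (Real.cosh (2 * b) - 1) ^ 2 / (16 * b ^ 2) ≤ ((Q + M) ^ 4 / (4 * Q ^ 5)) * C ^ 2
      ∧ 0 < b := by
  have hPpos : 0 < P := lt_of_lt_of_le hQpos hP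
  have hApos : 0 < A := by rw [hA]; linarith
  have hCA : C < A := by rw [hA]; linarith
  have hsub : 0 ≤ A ^ 2 - C ^ 2 := by nlinarith
  have hEnn : 0 ≤ E := hE ▸ Real.sqrt_nonneg _
  have hE2 : E ^ 2 = A ^ 2 - C ^ 2 := by rw [hE]; exact Real.sq_sqrt hsub
  have hEltA : E < A := by nlinarith
  have ha_pos : 0 < a := by rw [ha]; exact div_pos (by linarith) hc0
  have ha_leCA : a ≤ C / A := by
    rw [ha, div_le_div_iff₀ hc0 hApos]
    nlinarith
  have ha1 : a < 1 := lt_of_le_of_lt ha_leCA ((div_lt_one hApos).2 hCA)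
  have haM : a ≤ M / (Q + M) := by
    refine ha_leCA.trans ?_
    rw [div_le_div_iff₀ hApos (by linarith), hA]
    nlinarith
  have h1a : Q / (Q + M) ≤ 1 - a := by
    have h0 : M / (Q + M) + Q / (Q + M) = 1 := by field_simp; ring
    linarith
  have hupos : 0 < (1 + a) / (1 - a) := div_pos (by linarith) (by linarith)
  set u : ℝ := (1 + a) / (1 - a) with hu
  set s : ℝ := Real.sqrt u with hs
  have hspos : 0 < s := Real.sqrt_pos.2 hupos
  have hs2 : s ^ 2 = u := Real.sq_sqrt hupos.le
  have hu1 : 1 ≤ u := (one_le_div (by linarith)).2 (by linarith)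
  have hs1 : 1 ≤ s := by nlinarith
  have hcosh : Real.cosh (2 * b) = (s + s⁻¹) / 2 := by
    rw [hb, Real.cosh_eq, exp_artanh' ha_pos.le ha1, Real.exp_neg,
      exp_artanh' ha_pos.le ha1]
  clear_value u s
  have hss : s * s⁻¹ = 1 := mul_inv_cancel₀ hspos.ne'
  have hcosh_le : Real.cosh (2 * b) - 1 ≤ (u - 1) ^ 2 / 8 := by
    rw [hcosh]
    have h3 : (s + s⁻¹) / 2 - 1 = (s - 1) ^ 2 / (2 * s) := by
      field_simp
      ring
    have h3' : (s - 1) ^ 2 / (2 * s) ≤ (s - 1) ^ 2 / 2 :=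
      div_le_div_of_nonneg_left (sq_nonneg _) two_pos (by linarith)
    have h4 : s - 1 ≤ (u - 1) / 2 := by nlinarith [sq_nonneg (s - 1), hs2]
    have h5 : (s - 1) ^ 2 ≤ ((u - 1) / 2) ^ 2 := pow_le_pow_left₀ (by linarith) h4 2
    have h6 : ((u - 1) / 2) ^ 2 / 2 = (u - 1) ^ 2 / 8 := by ring
    linarith
  have hcosh_nn : 0 ≤ Real.cosh (2 * b) - 1 := by linarith [Real.one_le_cosh (2 * b)]
  have h1ane : (1 - a) ≠ 0 := ne_of_gt (by linarith)
  have hum1 : u - 1 = 2 * a / (1 - a) := by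
    rw [hu, div_sub_one h1ane]
    congr 1
    ring
  have hcosh_le2 : Real.cosh (2 * b) - 1 ≤ a ^ 2 / (2 * (1 - a) ^ 2) := by
    rw [hum1] at hcosh_le
    refine hcosh_le.trans (le_of_eq ?_)
    field_simp [h1ane]
    ring
  have hlog : a ≤ Real.log u := by
    have h5 : Real.log u⁻¹ ≤ u⁻¹ - 1 := Real.log_le_sub_one_of_pos (inv_pos.2 hupos)
    rw [Real.log_inv] at h5
    have h6 : u⁻¹ ≤ 1 - a := by
      rw [hu, inv_div]
      calc (1 - a) / (1 + a) ≤ (1 - a) / 1 :=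
            div_le_div_of_nonneg_left (by linarith) one_pos (by linarith)
        _ = 1 - a := div_one _
    linarith
  have hbge : a / 4 ≤ b := by
    have h7 : _root_.artanh a = (1/2) * Real.log u := by rw [_root_.artanh, hu]
    rw [h7] at hb
    linarith
  have hbpos : 0 < b := lt_of_lt_of_le (by linarith) hbge
  refine ⟨?_, hbpos⟩
  have hnum : E * (Real.cosh (2 * b) - 1) ^ 2 ≤ E * (a ^ 2 / (2 * (1 - a) ^ 2)) ^ 2 :=
    mul_le_mul_of_nonneg_left (pow_le_pow_left₀ hcosh_nn hcosh_le2 2) hEnn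
  have hden : a ^ 2 ≤ 16 * b ^ 2 := by nlinarith
  have step1 : E * (Real.cosh (2 * b) - 1) ^ 2 / (16 * b ^ 2)
      ≤ E * (a ^ 2 / (2 * (1 - a) ^ 2)) ^ 2 / a ^ 2 :=
    div_le_div₀ (by positivity) hnum (by positivity) hden
  refine step1.trans ?_
  have expr_eq : E * (a ^ 2 / (2 * (1 - a) ^ 2)) ^ 2 / a ^ 2 = E * a ^ 2 / (4 * (1 - a) ^ 4) := by
    field_simp
    ring
  rw [expr_eq]
  have hEa : E * a ^ 2 ≤ C ^ 2 / Q := by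
    have h7 : a ^ 2 ≤ (C / A) ^ 2 := pow_le_pow_left₀ ha_pos.le ha_leCA 2
    have h8 : E * a ^ 2 ≤ A * (C / A) ^ 2 :=
      mul_le_mul hEltA.le h7 (by positivity) hApos.le
    have h9 : A * (C / A) ^ 2 = C ^ 2 / A := by field_simp
    have h10 : C ^ 2 / A ≤ C ^ 2 / Q :=
      div_le_div_of_nonneg_left (by positivity) hQpos (by linarith)
    linarith
  have hqm : (Q / (Q + M)) ^ 4 ≤ (1 - a) ^ 4 := pow_le_pow_left₀ (by positivity) h1a 4
  calc E * a ^ 2 / (4 * (1 - a) ^ 4) ≤ (C ^ 2 / Q) / (4 * (Q / (Q + M)) ^ 4) :=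
        div_le_div₀ (by positivity) hEa (by positivity) (by linarith)
    _ = ((Q + M) ^ 4 / (4 * Q ^ 5)) * C ^ 2 := by
        field_simp

theorem statement12 (d : ℕ) (hd : 1 ≤ d) (c : (Fin d → ℤ) → ℝ)
    (hc : ∀ k, 0 ≤ c k) (hbdd : ∃ M : ℝ, ∀ k, c k ≤ M)
    (hsum : Summable fun k : Fin d → ℤ => (c k) ^ 2) :
    Summable (fun k : {k : Fin d → ℤ // k ≠ 0} =>
      if betaCoef d c k.1 = 0 then 0
      else excitation d c k.1 * (Real.cosh (2 * betaCoef d c k.1) - 1) ^ 2 /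
        (16 * (betaCoef d c k.1) ^ 2)) := by
  obtain ⟨M, hMb⟩ := hbdd
  have hM0 : 0 ≤ M := (hc 0).trans (hMb 0)
  set K : ℝ := (4 * π ^ 2 + M) ^ 4 / (4 * (4 * π ^ 2) ^ 5) with hK
  have hg : Summable (fun k : {k : Fin d → ℤ // k ≠ 0} => K * c k.1 ^ 2) := by
    have h1 : Summable (fun k : {k : Fin d → ℤ // k ≠ 0} => c k.1 ^ 2) :=
      (hsum.subtype {k : Fin d → ℤ | k ≠ 0})
    exact h1.mul_left K
  refine Summable.of_nonneg_of_le (fun k => ?_) (fun k => ?_) hg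
  · split
    · exact le_refl 0
    · exact div_nonneg (mul_nonneg (Real.sqrt_nonneg _) (sq_nonneg _)) (by positivity)
  · rcases (hc k.1).eq_or_lt with h0 | h0
    · have hb0 : betaCoef d c k.1 = 0 := by
        have ha0 : alphaCoef d c k.1 = 0 := by
          rw [alphaCoef, if_neg]
          rw [← h0]
          exact lt_irrefl 0
        rw [betaCoef, ha0, artanh_zero', mul_zero]
      rw [if_pos hb0]
      positivity
    · have hcore := core (4 * π ^ 2) M (pSq d k.1) (c k.1) (pSq d k.1 + c k.1)
        (Real.sqrt ((pSq d k.1 + c k.1) ^ 2 - (c k.1) ^ 2)) (alphaCoef d c k.1)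
        (betaCoef d c k.1) (by positivity) hM0 h0 (hMb k.1) (pSq_ge' d k.1 k.2)
        rfl rfl (by rw [alphaCoef, if_pos h0]) (by rw [betaCoef]; ring)
      have hexc : excitation d c k.1
          = Real.sqrt ((pSq d k.1 + c k.1) ^ 2 - (c k.1) ^ 2) := by
        rw [excitation]
        congr 1
        ring
      rw [if_neg hcore.2.ne', hexc]
      exact hcore.1
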